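/- Let G be a finite connected simple graph of order n, size m, diameter d, with k peripheral vertices. Then d·⌈k/2⌉ − (d−3)·(C(n,2) − C(k,2)) − m ≤ PW(G) ≤ (d−1)·C(n,2) + (d+1)·C(k,2) − (d−2)·m − (d−1)·⌈k/2⌉. -/

import Mathlib

open Finset SimpleGraph

noncomputable section

/-- Eccentricity of a vertex: maximum distance to any vertex. -/
def ecc {V : Type*} [Fintype V] (G : SimpleGraph V) (u : V) : ℕ :=
  Finset.univ.sup (G.dist u)

/-- Diameter: maximum eccentricity. -/
def gdiam {V : Type*} [Fintype V] (G : SimpleGraph V) : ℕ :=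
  Finset.univ.sup (ecc G)

/-- The set of peripheral vertices: vertices of maximum eccentricity. -/
def peri {V : Type*} [Fintype V] [DecidableEq V] (G : SimpleGraph V) : Finset V :=
  Finset.univ.filter (fun u => ecc G u = gdiam G)

/-- Wiener index: sum of distances over unordered pairs of distinct vertices. -/
def wiener {V : Type*} [Fintype V] [DecidableEq V] (G : SimpleGraph V) : ℚ :=
  (1/2) * ∑ p ∈ (Finset.univ : Finset V).offDiag, (G.dist p.1 p.2 : ℚ)

/-- Hyper-Wiener index. -/
def hyperWiener {V : Type*} [Fintype V] [DecidableEq V] (G : SimpleGraph V) : ℚ :=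
  (1/4) * ∑ p ∈ (Finset.univ : Finset V).offDiag,
    ((G.dist p.1 p.2 : ℚ) + (G.dist p.1 p.2 : ℚ) ^ 2)

/-- Peripheral Wiener index. -/
def periWiener {V : Type*} [Fintype V] [DecidableEq V] (G : SimpleGraph V) : ℚ :=
  (1/2) * ∑ p ∈ (peri G).offDiag, (G.dist p.1 p.2 : ℚ)

/-- Peripheral hyper-Wiener index. -/
def periHyperWiener {V : Type*} [Fintype V] [DecidableEq V] (G : SimpleGraph V) : ℚ :=
  (1/4) * ∑ p ∈ (peri G).offDiag,
    ((G.dist p.1 p.2 : ℚ) + (G.dist p.1 p.2 : ℚ) ^ 2)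

end

set_option maxHeartbeats 1000000 in
theorem pw_bounds {V : Type*} [Fintype V] [DecidableEq V]
    (G : SimpleGraph V) (hG : G.Connected)
    (n m d k : ℕ) (hn : n = Fintype.card V) (hm : m = G.edgeSet.ncard)
    (hd : d = gdiam G) (hk : k = (peri G).card) :
    (d : ℚ) * (⌈(k : ℚ) / 2⌉ : ℚ) -
        ((d : ℚ) - 3) * ((Nat.choose n 2 : ℚ) - (Nat.choose k 2 : ℚ)) - (m : ℚ)
      ≤ periWiener G ∧
    periWiener G ≤ ((d : ℚ) - 1) * (Nat.choose n 2 : ℚ) + ((d : ℚ) + 1) * (Nat.choose k 2 : ℚ)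
      - ((d : ℚ) - 2) * (m : ℚ) - ((d : ℚ) - 1) * (⌈(k : ℚ) / 2⌉ : ℚ) := by
  classical
  have hVne : Nonempty V := hG.nonempty
  set P : Finset V := peri G with hP
  -- basic distance facts
  have hdist_le : ∀ u v : V, G.dist u v ≤ d := by
    intro u v
    rw [hd]
    exact le_trans (Finset.le_sup (f := G.dist u) (Finset.mem_univ v))
      (Finset.le_sup (f := ecc G) (Finset.mem_univ u))
  have hPne : P.Nonempty := by
    obtain ⟨u, -, hu⟩ := Finset.exists_mem_eq_sup (Finset.univ : Finset V)
      Finset.univ_nonempty (ecc G)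
    exact ⟨u, Finset.mem_filter.mpr ⟨Finset.mem_univ u, hu.symm⟩⟩
  have hmemP : ∀ u : V, u ∈ P ↔ ecc G u = gdiam G := by
    intro u; simp [hP, peri]
  have hpartner : ∀ u ∈ P, ∃ v ∈ P, G.dist u v = d := by
    intro u hu
    have hu' : ecc G u = gdiam G := (hmemP u).mp hu
    obtain ⟨v, -, hv⟩ := Finset.exists_mem_eq_sup (Finset.univ : Finset V)
      Finset.univ_nonempty (G.dist u)
    have hduv : G.dist u v = d := by rw [hd, ← hu', ecc, ← hv]
    refine ⟨v, (hmemP v).mpr (le_antisymm ?_ ?_), hduv⟩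
    · exact Finset.le_sup (f := ecc G) (Finset.mem_univ v)
    · calc gdiam G = G.dist v u := by rw [SimpleGraph.dist_comm, hduv, hd]
        _ ≤ ecc G v := Finset.le_sup (f := G.dist v) (Finset.mem_univ u)
  -- cardinal facts
  have hkn : k ≤ n := by
    rw [hk, hn, ← Finset.card_univ]
    exact Finset.card_le_card (Finset.filter_subset _ _)
  have hk1 : 1 ≤ k := by rw [hk]; exact Finset.card_pos.mpr hPne
  have hdn : d < n := by
    obtain ⟨u, hu⟩ := hPne
    obtain ⟨v, -, huv⟩ := hpartner u hu
    obtain ⟨p, hp, hlen⟩ := hG.exists_path_of_dist u v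
    rw [hn, ← huv, ← hlen]
    exact hp.length_lt
  have hk2 : 1 ≤ d → 2 ≤ k := by
    intro hd1
    obtain ⟨u, hu⟩ := hPne
    obtain ⟨v, hv, huv⟩ := hpartner u hu
    have hne : u ≠ v := by
      intro h; rw [h, G.dist_self] at huv; omega
    rw [hk]
    exact Finset.one_lt_card.mpr ⟨u, hu, v, hv, hne⟩
  -- the diametral pair set
  set D : Finset (V × V) :=
    P.offDiag.filter (fun p => G.dist p.1 p.2 = d) with hD
  have hDsymm : ∀ p ∈ D, (p.2, p.1) ∈ D := by
    intro p hp
    obtain ⟨hpo, hpd⟩ := Finset.mem_filter.mp hp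
    obtain ⟨h1, h2, h3⟩ := Finset.mem_offDiag.mp hpo
    exact Finset.mem_filter.mpr ⟨Finset.mem_offDiag.mpr ⟨h2, h1, Ne.symm h3⟩,
      by rw [G.dist_comm]; exact hpd⟩
  -- double counting : |D| is even
  have hDeven : D.card = 2 * (D.image (fun p => s(p.1, p.2))).card := by
    rw [Finset.card_eq_sum_card_image (fun p : V × V => s(p.1, p.2)) D]
    rw [Finset.sum_congr rfl (g := fun _ => 2) ?_, Finset.sum_const, smul_eq_mul, mul_comm]
    intro b hb
    obtain ⟨a, ha, rfl⟩ := Finset.mem_image.mp hb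
    have hane : a.1 ≠ a.2 := (Finset.mem_offDiag.mp (Finset.mem_filter.mp ha).1).2.2
    show (D.filter (fun q => s(q.1, q.2) = s(a.1, a.2))).card = 2
    have heq : D.filter (fun q => s(q.1, q.2) = s(a.1, a.2)) = {a, (a.2, a.1)} := by
      ext q
      simp only [Finset.mem_filter, Finset.mem_insert, Finset.mem_singleton, Sym2.eq_iff]
      constructor
      · rintro ⟨hqD, (⟨h1, h2⟩ | ⟨h1, h2⟩)⟩
        · left; exact Prod.ext h1 h2
        · right; exact Prod.ext h1 h2
      · rintro (rfl | rfl)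
        · exact ⟨ha, Or.inl ⟨rfl, rfl⟩⟩
        · exact ⟨hDsymm a ha, Or.inr ⟨rfl, rfl⟩⟩
    rw [heq]
    exact Finset.card_pair (fun h => hane (congrArg Prod.fst h))
  -- each peripheral vertex is covered : k ≤ |D|
  have hDk : 1 ≤ d → k ≤ D.card := by
    intro hd1
    have hex : ∀ u : V, ∃ v, u ∈ P → (u, v) ∈ D := by
      intro u
      by_cases hu : u ∈ P
      · obtain ⟨v, hv, huv⟩ := hpartner u hu
        have hne : u ≠ v := by intro h; rw [h, G.dist_self] at huv; omega
        exact ⟨v, fun _ => Finset.mem_filter.mpr ⟨Finset.mem_offDiag.mpr ⟨hu, hv, hne⟩, huv⟩⟩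
      · exact ⟨u, fun h => absurd h hu⟩
    choose g hg using hex
    rw [hk]
    apply Finset.card_le_card_of_injOn (fun u => (u, g u))
    · intro u hu
      exact hg u hu
    · intro a _ b _ hab
      exact congrArg Prod.fst hab
  -- sum bounds over peripheral pairs
  set S : ℕ := ∑ p ∈ P.offDiag, G.dist p.1 p.2 with hS
  have hsum_low : d * (k + k % 2) ≤ S := by
    rcases Nat.eq_zero_or_pos d with h0 | hd1
    · simp [h0]
    · have hDsub : D ⊆ P.offDiag := Finset.filter_subset _ _
      have h1 : d * D.card ≤ S := by
        calc d * D.card = ∑ _p ∈ D, d := by rw [Finset.sum_const, smul_eq_mul, mul_comm]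
          _ = ∑ p ∈ D, G.dist p.1 p.2 :=
            Finset.sum_congr rfl (fun p hp => ((Finset.mem_filter.mp hp).2).symm)
          _ ≤ S := Finset.sum_le_sum_of_subset hDsub
      have h2 : k + k % 2 ≤ D.card := by
        have := hDk hd1
        omega
      exact le_trans (Nat.mul_le_mul_left d h2) h1
  have hsum_high : S ≤ d * (k * k - k) := by
    calc S ≤ P.offDiag.card • d :=
        Finset.sum_le_card_nsmul _ _ d (fun p _ => hdist_le p.1 p.2)
      _ = d * (k * k - k) := by
        rw [smul_eq_mul, Finset.offDiag_card, ← hk, mul_comm]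
  -- move to ℚ
  have hPW : 2 * periWiener G = (S : ℚ) := by
    rw [periWiener, hS]
    push_cast
    ring
  set c : ℚ := (⌈(k : ℚ) / 2⌉ : ℚ) with hc_def
  have hc : c * 2 = (k : ℚ) + ((k % 2 : ℕ) : ℚ) := by
    obtain ⟨t, ht⟩ | ⟨t, ht⟩ := Nat.even_or_odd k <;> subst ht
    · have h1 : ((t + t : ℕ) : ℚ) / 2 = ((t : ℤ) : ℚ) := by push_cast; ring
      rw [hc_def, h1, Int.ceil_intCast]
      have h2 : (t + t) % 2 = 0 := by omega
      rw [h2]; push_cast; ring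
    · have h1 : ⌈((2 * t + 1 : ℕ) : ℚ) / 2⌉ = (t : ℤ) + 1 := by
        rw [Int.ceil_eq_iff]
        constructor <;> (push_cast; try linarith)
      rw [hc_def, h1]
      have h2 : (2 * t + 1) % 2 = 1 := by omega
      rw [h2]; push_cast; ring
  have hr0 : (0 : ℚ) ≤ ((k % 2 : ℕ) : ℚ) := by positivity
  have hr1 : ((k % 2 : ℕ) : ℚ) ≤ 1 := by
    have : k % 2 ≤ 1 := by omega
    exact_mod_cast this
  have hc0 : 0 ≤ c := by
    have : (0:ℚ) ≤ (k:ℚ) := by positivity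
    linarith
  set A : ℚ := (Nat.choose k 2 : ℚ) with hA_def
  set N : ℚ := (Nat.choose n 2 : ℚ) with hN_def
  have hA : A * 2 = (k : ℚ) * ((k : ℚ) - 1) := by
    rw [hA_def, Nat.cast_choose_two]; ring
  have hN : N * 2 = (n : ℚ) * ((n : ℚ) - 1) := by
    rw [hN_def, Nat.cast_choose_two]; ring
  have hAN : A ≤ N := by
    rw [hA_def, hN_def]
    exact_mod_cast Nat.choose_le_choose 2 hkn
  have hA0 : 0 ≤ A := by rw [hA_def]; positivity
  have hN0 : 0 ≤ N := by rw [hN_def]; positivity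
  have hm0 : (0:ℚ) ≤ (m:ℚ) := by positivity
  -- m ≤ N
  have hmN : (m : ℚ) ≤ N := by
    have h4 : G.edgeSet.ncard = G.edgeFinset.card := by
      have := Set.ncard_coe_finset G.edgeFinset; rwa [SimpleGraph.coe_edgeFinset] at this
    have := SimpleGraph.card_edgeFinset_le_card_choose_two (G := G)
    rw [hN_def, hm, h4, hn]
    exact_mod_cast this
  -- PW bounds in ℚ
  have hq_low : (d : ℚ) * c ≤ periWiener G := by
    have h1 : ((d * (k + k % 2) : ℕ) : ℚ) ≤ (S : ℚ) := by exact_mod_cast hsum_low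
    have h2 : ((d * (k + k % 2) : ℕ) : ℚ) = 2 * ((d : ℚ) * c) := by
      push_cast
      rw [show (2:ℚ) * ((d:ℚ) * c) = (d:ℚ) * (c * 2) by ring, hc]
    linarith [hPW]
  have hq_high : periWiener G ≤ (d : ℚ) * A := by
    have hkk : k ≤ k * k := by nlinarith
    have h1 : ((d * (k * k - k) : ℕ) : ℚ) = 2 * ((d : ℚ) * A) := by
      push_cast [Nat.cast_sub hkk]
      rw [show (2:ℚ) * ((d:ℚ) * A) = (d:ℚ) * (A * 2) by ring, hA]
      ring
    have h2 : (S : ℚ) ≤ ((d * (k * k - k) : ℕ) : ℚ) := by exact_mod_cast hsum_high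
    linarith [hPW]
  -- k ≥ 2 consequences
  have hcA : 1 ≤ d → c ≤ A := by
    intro hd1
    have hk2' := hk2 hd1
    have h1 : k + k % 2 ≤ 2 * (k - 1) := by omega
    have h2 : c ≤ (k : ℚ) - 1 := by
      have : ((k + k % 2 : ℕ) : ℚ) ≤ ((2 * (k - 1) : ℕ) : ℚ) := by exact_mod_cast h1
      push_cast [Nat.cast_sub hk1] at this
      push_cast at hc
      linarith
    have h3 : (k : ℚ) - 1 ≤ A := by
      have hk2q : (2 : ℚ) ≤ (k : ℚ) := by exact_mod_cast hk2'
      nlinarith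
    linarith
  -- mixed pairs are edges when d = 2
  have hmix : d = 2 → N - A ≤ (m : ℚ) := by
    intro hd2
    have hPod : Finset.univ.offDiag.filter
        (fun p : V × V => p.1 ∈ P ∧ p.2 ∈ P) = P.offDiag := by
      ext p
      simp only [Finset.mem_filter, Finset.mem_offDiag, Finset.mem_univ, true_and]
      tauto
    have hsub : Finset.univ.offDiag.filter (fun p : V × V => ¬(p.1 ∈ P ∧ p.2 ∈ P)) ⊆
        Finset.univ.filter (fun p : V × V => G.Adj p.1 p.2) := by
      intro p hp
      obtain ⟨hpo, hpn⟩ := Finset.mem_filter.mp hp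
      have hne : p.1 ≠ p.2 := (Finset.mem_offDiag.mp hpo).2.2
      have key : ∀ u v : V, u ≠ v → u ∉ P → G.Adj u v := by
        intro u v huv hu
        have he1 : ecc G u ≤ d := by
          rw [hd]; exact Finset.le_sup (f := ecc G) (Finset.mem_univ u)
        have he2 : ecc G u ≠ d := by
          intro h; exact hu ((hmemP u).mpr (by rw [h, hd]))
        have he3 : 1 ≤ ecc G u :=
          le_trans (hG.pos_dist_of_ne huv) (Finset.le_sup (f := G.dist u) (Finset.mem_univ v))
        have he4 : G.dist u v ≤ ecc G u := Finset.le_sup (f := G.dist u) (Finset.mem_univ v)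
        have he5 : 1 ≤ G.dist u v := hG.pos_dist_of_ne huv
        have : G.dist u v = 1 := by omega
        exact (SimpleGraph.dist_eq_one_iff_adj).mp this
      rw [Finset.mem_filter]
      refine ⟨Finset.mem_univ p, ?_⟩
      rcases not_and_or.mp hpn with h | h
      · exact key p.1 p.2 hne h
      · exact (key p.2 p.1 (Ne.symm hne) h).symm
    have hcard : n * n - n ≤ 2 * m + (k * k - k) := by
      have h1 : Finset.univ.offDiag.card =
          (Finset.univ.offDiag.filter (fun p : V × V => p.1 ∈ P ∧ p.2 ∈ P)).card +
          (Finset.univ.offDiag.filter (fun p : V × V => ¬(p.1 ∈ P ∧ p.2 ∈ P))).card :=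
        (Finset.card_filter_add_card_filter_not _).symm
      rw [hPod] at h1
      have h2 := Finset.card_le_card hsub
      have h3 : (Finset.univ.filter (fun p : V × V => G.Adj p.1 p.2)).card =
          2 * m := by
        have e1 : G.edgeSet.ncard = G.edgeFinset.card := by
          have := Set.ncard_coe_finset G.edgeFinset; rwa [SimpleGraph.coe_edgeFinset] at this
        rw [hm, e1, SimpleGraph.two_mul_card_edgeFinset]
      rw [Finset.offDiag_card, Finset.card_univ, ← hn] at h1
      rw [Finset.offDiag_card, ← hk] at h1
      omega
    have hkk : k ≤ k * k := by nlinarith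
    have hnn : n ≤ n * n := by nlinarith
    have : ((n * n - n : ℕ) : ℚ) ≤ ((2 * m + (k * k - k) : ℕ) : ℚ) := by exact_mod_cast hcard
    push_cast [Nat.cast_sub hkk, Nat.cast_sub hnn] at this
    nlinarith [hA, hN]
  -- k = n when d = 1
  have hall : d = 1 → A = N := by
    intro hd1
    have hkn' : k = n := by
      have : P = Finset.univ := by
        obtain ⟨u, hu⟩ := hPne
        obtain ⟨v, hv, huv⟩ := hpartner u hu
        have hne : u ≠ v := by intro h; rw [h, G.dist_self] at huv; omega
        apply Finset.eq_univ_of_forall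
        intro w
        rw [hmemP]
        have h1 : ecc G w ≤ gdiam G := Finset.le_sup (f := ecc G) (Finset.mem_univ w)
        have h2 : 1 ≤ ecc G w := by
          rcases eq_or_ne w u with rfl | hwu
          · exact le_trans (hG.pos_dist_of_ne hne)
              (Finset.le_sup (f := G.dist w) (Finset.mem_univ v))
          · exact le_trans (hG.pos_dist_of_ne hwu)
              (Finset.le_sup (f := G.dist w) (Finset.mem_univ u))
        rw [← hd] at h1 ⊢
        omega
      rw [hk, hn, this, Finset.card_univ]
    rw [hA_def, hN_def, hkn']
  -- n = 1 when d = 0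
  have hone : d = 0 → N = 0 ∧ A = 0 := by
    intro hd0
    have hn1 : n = 1 := by
      have : ∀ a b : V, a = b := by
        intro a b
        have := hdist_le a b
        rw [hd0] at this
        exact (hG.dist_eq_zero_iff).mp (by omega)
      have h1 : Fintype.card V ≤ 1 := Fintype.card_le_one_iff.mpr this
      have h2 : 1 ≤ Fintype.card V := Fintype.card_pos
      omega
    have hk1' : k = 1 := by omega
    constructor
    · rw [hN_def, hn1]; norm_num
    · rw [hA_def, hk1']; norm_num
  -- final arithmetic, by cases on d
  constructor
  · -- lower bound
    rcases Nat.lt_or_ge d 3 with h3 | h3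
    · interval_cases d
      · obtain ⟨hN1, hA1⟩ := hone rfl
        push_cast
        rw [hN1, hA1]
        have : (0:ℚ) ≤ periWiener G := by
          have : (0:ℚ) ≤ (S:ℚ) := by positivity
          linarith [hPW]
        linarith
      · have hAN1 := hall rfl
        push_cast
        rw [hAN1]
        push_cast at hq_low
        linarith
      · have := hmix rfl
        push_cast at hq_low ⊢
        linarith
    · have hd3 : (3 : ℚ) ≤ (d : ℚ) := by exact_mod_cast h3
      have := mul_nonneg (by linarith : (0:ℚ) ≤ (d:ℚ) - 3) (by linarith : (0:ℚ) ≤ N - A)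
      linarith [hq_low]
  · -- upper bound
    have hsuff : (0:ℚ) ≤ ((d:ℚ) - 1) * N + A - ((d:ℚ) - 2) * (m:ℚ) - ((d:ℚ) - 1) * c := by
      rcases Nat.lt_or_ge d 3 with h3 | h3
      · interval_cases d
        · obtain ⟨hN1, hA1⟩ := hone rfl
          push_cast
          rw [hN1, hA1]
          linarith
        · push_cast
          linarith
        · have hcA' := hcA (by norm_num)
          push_cast
          linarith
      · have hd3 : (3 : ℚ) ≤ (d : ℚ) := by exact_mod_cast h3
        have hcA' := hcA (by omega)
        have hk2' := hk2 (by omega)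
        have hnq : (d : ℚ) + 1 ≤ (n : ℚ) := by exact_mod_cast hdn
        have hknq : (k : ℚ) ≤ (n : ℚ) := by exact_mod_cast hkn
        have p1 : ((d:ℚ) - 2) * (m:ℚ) ≤ ((d:ℚ) - 2) * N :=
          mul_le_mul_of_nonneg_left hmN (by linarith)
        -- N ≥ (d-2) * c
        have hcn : c * 2 ≤ (k:ℚ) + 1 := by linarith [hc, hr1]
        have p2 : ((d:ℚ) - 2) * (c * 2) ≤ ((n:ℚ) - 3) * ((k:ℚ) + 1) := by
          apply mul_le_mul (by linarith) hcn (by linarith) (by linarith)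
        have p3 : ((n:ℚ) - 3) * ((k:ℚ) + 1) ≤ ((n:ℚ) - 3) * ((n:ℚ) + 1) := by
          apply mul_le_mul_of_nonneg_left (by linarith) (by linarith)
        have p4 : ((n:ℚ) - 3) * ((n:ℚ) + 1) ≤ N * 2 := by nlinarith [hN]
        linarith
    linarith [hq_high, hsuff]
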